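/- For a JBL FTVGS model class with spectral support 𝒩 of size B, there exists a stable sampling set S with exactly B samples, achieving the critical sampling ratio R_F(S) = B/(NT); moreover the vertices used satisfy |S_G| ≤ B_G. -/

import Mathlib

open Matrix Finset Kronecker

/-- critical sampling is achievable: there is a sampling set S with
exactly B samples determining every element of the model class, and the set of
sampled vertices has cardinality at most B_G. -/
theorem stmt13 {N T B B_G : ℕ}
    (U_G : Matrix (Fin N) (Fin N) ℂ) (U_T : Matrix (Fin T) (Fin T) ℂ)
    (hUG : U_G ∈ Matrix.unitaryGroup (Fin N) ℂ)
    (hUT : U_T ∈ Matrix.unitaryGroup (Fin T) ℂ)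
    (I : Finset (Fin N)) (𝓕 : Finset (Fin T))
    (𝒩 : Finset (Fin N × Fin T)) (hsub : 𝒩 ⊆ I ×ˢ 𝓕)
    (hI : I.card = B_G) (h𝒩 : 𝒩.card = B) :
    ∃ S : Finset (Fin N × Fin T), S.card = B ∧
      (∀ y y' : Fin N × Fin T → ℂ,
        (∀ q ∉ 𝒩, y q = 0) → (∀ q ∉ 𝒩, y' q = 0) →
        (∀ s ∈ S, (U_G ⊗ₖ U_T).mulVec y s = (U_G ⊗ₖ U_T).mulVec y' s) →
        (U_G ⊗ₖ U_T).mulVec y = (U_G ⊗ₖ U_T).mulVec y') ∧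
      (S.image Prod.fst).card ≤ B_G := by
  classical
  set M : Matrix (Fin N × Fin T) (Fin N × Fin T) ℂ := U_G ⊗ₖ U_T with hM
  -- M is unitary
  have hMH : Mᴴ = (U_Gᴴ) ⊗ₖ (U_Tᴴ) := by
    ext i j
    simp [hM, Matrix.conjTranspose_apply, Matrix.kroneckerMap_apply, star_mul', mul_comm]
  have hMM : Mᴴ * M = 1 := by
    have h1 : U_Gᴴ * U_G = 1 := by
      have := hUG.1; rwa [Matrix.star_eq_conjTranspose] at this
    have h2 : U_Tᴴ * U_T = 1 := by
      have := hUT.1; rwa [Matrix.star_eq_conjTranspose] at this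
    rw [hMH, hM, ← Matrix.mul_kronecker_mul, h1, h2, Matrix.one_kronecker_one]
  -- membership of first coordinates
  have hq1 : ∀ q : {x // x ∈ 𝒩}, q.1.1 ∈ I := fun q =>
    (Finset.mem_product.mp (hsub q.2)).1
  -- rows viewed as vectors on 𝒩
  set r : Fin N × Fin T → ({x // x ∈ 𝒩} → ℂ) :=
    fun s q => U_G s.1 q.1.1 * U_T s.2 q.1.2 with hr
  have hrM : ∀ s q, r s q = M s q.1 := by
    intro s q; simp [hr, hM, Matrix.kroneckerMap_apply]
  -- rows of U_G restricted to I
  set rI : Fin N → ({x // x ∈ I} → ℂ) := fun v i => U_G v i.1 with hrI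
  -- the linear maps connecting rI to r
  have hLr : ∀ (t : Fin T), ∃ L : ({x // x ∈ I} → ℂ) →ₗ[ℂ] ({x // x ∈ 𝒩} → ℂ),
      ∀ v, L (rI v) = r (v, t) := by
    intro t
    refine ⟨{ toFun := fun z q => z ⟨q.1.1, hq1 q⟩ * U_T t q.1.2
              map_add' := by intro a b; funext q; simp [add_mul]
              map_smul' := by intro c a; funext q; simp [mul_assoc] }, ?_⟩
    intro v; rfl
  choose L hL using hLr
  -- Step 1: all rows span everything
  have hsingle : ∀ q' : {x // x ∈ 𝒩},
      Pi.single q' (1 : ℂ) ∈ Submodule.span ℂ (Set.range r) := by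
    intro q'
    have hrep : Pi.single q' (1 : ℂ) = ∑ s : Fin N × Fin T, (star (M s q'.1)) • r s := by
      funext q
      have h1 : (∑ s : Fin N × Fin T, (star (M s q'.1)) • r s) q
          = (Mᴴ * M) q'.1 q.1 := by
        simp only [Finset.sum_apply, Pi.smul_apply, smul_eq_mul, Matrix.mul_apply,
          Matrix.conjTranspose_apply]
        exact Finset.sum_congr rfl fun s _ => by rw [hrM]
      rw [h1, hMM, Matrix.one_apply]
      by_cases h : q' = q
      · subst h; simp
      · rw [if_neg (fun hc => h (Subtype.ext hc)), Pi.single_apply,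
          if_neg (fun hc => h hc.symm)]
    rw [hrep]
    exact Submodule.sum_mem _ fun s _ =>
      Submodule.smul_mem _ _ (Submodule.subset_span (Set.mem_range_self s))
  have hspan_all : Submodule.span ℂ (Set.range r) = ⊤ := by
    rw [eq_top_iff]
    intro z _
    have hz : z = ∑ q : {x // x ∈ 𝒩}, Pi.single q (z q) := by
      rw [Finset.univ_sum_single]
    rw [hz]
    refine Submodule.sum_mem _ fun q _ => ?_
    have : Pi.single q (z q) = (z q) • (Pi.single q 1 : {x // x ∈ 𝒩} → ℂ) := by
      funext p; by_cases h : p = q <;> simp [Pi.single_apply, h]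
    rw [this]
    exact Submodule.smul_mem _ _ (hsingle q)
  -- Step 2: a small vertex set V' whose rI rows span all rI rows
  obtain ⟨b, hbsub, hbspan, hbind⟩ := exists_linearIndependent ℂ (Set.range rI)
  have hbfin : b.Finite := hbind.setFinite
  haveI hbfint : Fintype b := hbfin.fintype
  choose g hg using fun x : b => hbsub x.2
  set V' : Finset (Fin N) := Finset.univ.image (fun x : b => g x) with hV'
  have hV'card : V'.card ≤ B_G := by
    calc V'.card ≤ (Finset.univ : Finset b).card := Finset.card_image_le
      _ = Fintype.card b := Finset.card_univ
      _ ≤ Module.finrank ℂ ({x // x ∈ I} → ℂ) := hbind.fintype_card_le_finrank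
      _ = Fintype.card {x // x ∈ I} := Module.finrank_fintype_fun_eq_card ℂ
      _ = I.card := Fintype.card_coe I
      _ = B_G := hI
  have hbsub2 : b ⊆ rI '' (V' : Set (Fin N)) := by
    intro x hx
    exact ⟨g ⟨x, hx⟩, by simp [hV'], hg ⟨x, hx⟩⟩
  have hV'span : ∀ v, rI v ∈ Submodule.span ℂ (rI '' (V' : Set (Fin N))) := by
    intro v
    have h1 : rI v ∈ Submodule.span ℂ (Set.range rI) :=
      Submodule.subset_span (Set.mem_range_self v)
    rw [← hbspan] at h1
    exact Submodule.span_mono hbsub2 h1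
  -- Step 3: rows over V' × univ still span everything
  set W : Finset (Fin N × Fin T) := V' ×ˢ Finset.univ with hW
  have hspanV : Submodule.span ℂ (r '' (W : Set (Fin N × Fin T))) = ⊤ := by
    rw [eq_top_iff, ← hspan_all, Submodule.span_le]
    rintro _ ⟨⟨v, t⟩, rfl⟩
    have h2 : L t (rI v) ∈ Submodule.map (L t)
        (Submodule.span ℂ (rI '' (V' : Set (Fin N)))) :=
      Submodule.mem_map_of_mem (hV'span v)
    rw [Submodule.map_span] at h2
    rw [← hL t v]
    refine Submodule.span_mono ?_ h2
    rintro _ ⟨_, ⟨v', hv', rfl⟩, rfl⟩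
    refine ⟨(v', t), ?_, (hL t v').symm⟩
    simp only [hW, Finset.coe_product, Set.mem_prod]
    exact ⟨hv', by simp⟩
  -- Step 4: extract a basis from rows over W
  obtain ⟨c, hcsub, hcspan, hcind⟩ := exists_linearIndependent ℂ
    (r '' (W : Set (Fin N × Fin T)))
  rw [hspanV] at hcspan
  have hcfin : c.Finite := hcind.setFinite
  haveI hcfint : Fintype c := hcfin.fintype
  have hfr : Module.finrank ℂ ({x // x ∈ 𝒩} → ℂ) = B := by
    rw [Module.finrank_fintype_fun_eq_card, Fintype.card_coe, h𝒩]
  have hcard_le : Fintype.card c ≤ B := hfr ▸ hcind.fintype_card_le_finrank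
  have hcard_ge : B ≤ Fintype.card c := by
    have h1 := finrank_span_le_card (R := ℂ) c
    rw [hcspan, finrank_top, hfr, Set.toFinset_card] at h1
    exact h1
  have hcard : Fintype.card c = B := le_antisymm hcard_le hcard_ge
  choose h hhW hhr using fun x : c => hcsub x.2
  have hinj : Function.Injective h := by
    intro x x' hxx
    apply Subtype.ext
    rw [← hhr x, ← hhr x', hxx]
  set S : Finset (Fin N × Fin T) := Finset.univ.image h with hS
  have hScard : S.card = B := by
    rw [hS, Finset.card_image_of_injective _ hinj, Finset.card_univ, hcard]
  refine ⟨S, hScard, ?_, ?_⟩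
  · -- the sampling property
    intro y y' hy hy' hsamp
    have hmv : ∀ (w : Fin N × Fin T → ℂ), (∀ q ∉ 𝒩, w q = 0) → ∀ s,
        M.mulVec w s = ∑ q : {x // x ∈ 𝒩}, M s q.1 * w q.1 := by
      intro w hw s
      rw [Matrix.mulVec, dotProduct]
      rw [← Finset.sum_subset (Finset.subset_univ 𝒩)
        (fun p _ hp => by rw [hw p hp, mul_zero])]
      rw [← Finset.sum_attach 𝒩 (fun p => M s p * w p)]
      rfl
    have key : ∀ q : {x // x ∈ 𝒩}, y q.1 = y' q.1 := by
      set z : {x // x ∈ 𝒩} → ℂ := fun q => y q.1 - y' q.1 with hz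
      set φ : ({x // x ∈ 𝒩} → ℂ) →ₗ[ℂ] ℂ :=
        { toFun := fun w => ∑ q, w q * z q
          map_add' := by
            intro a b
            simp [add_mul, Finset.sum_add_distrib]
          map_smul' := by
            intro co a
            simp [Finset.mul_sum, mul_assoc] } with hφ
      have hφr : ∀ x ∈ r '' (S : Set (Fin N × Fin T)), φ x = (0 : ({x // x ∈ 𝒩} → ℂ) →ₗ[ℂ] ℂ) x := by
        rintro _ ⟨s, hsS, rfl⟩
        have h1 : φ (r s) = M.mulVec y s - M.mulVec y' s := by
          rw [hmv y hy s, hmv y' hy' s, ← Finset.sum_sub_distrib]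
          simp only [hφ, LinearMap.coe_mk, AddHom.coe_mk, hz]
          exact Finset.sum_congr rfl fun q _ => by rw [hrM]; ring
        simp only [LinearMap.zero_apply]
        rw [h1, hsamp s (by simpa using hsS), sub_self]
      have hspanS : Submodule.span ℂ (r '' (S : Set (Fin N × Fin T))) = ⊤ := by
        rw [eq_top_iff, ← hcspan, Submodule.span_le]
        intro x hx
        refine Submodule.subset_span ⟨h ⟨x, hx⟩, ?_, hhr ⟨x, hx⟩⟩
        simp [hS]
      have hφ0 : φ = 0 := LinearMap.ext_on hspanS hφr
      intro q
      have h2 : φ (Pi.single q 1) = z q := by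
        simp only [hφ, LinearMap.coe_mk, AddHom.coe_mk]
        show ∑ p, (Pi.single q (1:ℂ) : {x // x ∈ 𝒩} → ℂ) p * z p = z q
        rw [Finset.sum_eq_single q (fun p _ hp => by
          rw [Pi.single_apply, if_neg hp, zero_mul]) (by simp)]
        simp
      rw [hφ0] at h2
      have : z q = 0 := by simpa using h2.symm
      exact sub_eq_zero.mp (by simpa [hz] using this)
    have hyy : y = y' := by
      funext p
      by_cases hp : p ∈ 𝒩
      · exact key ⟨p, hp⟩
      · rw [hy p hp, hy' p hp]
    show M.mulVec y = M.mulVec y'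
    rw [hyy]
  · -- the vertex count
    have hSsub : S.image Prod.fst ⊆ V' := by
      intro v hv
      rw [Finset.mem_image] at hv
      obtain ⟨s, hsS, rfl⟩ := hv
      rw [hS, Finset.mem_image] at hsS
      obtain ⟨x, _, rfl⟩ := hsS
      have h2 : h x ∈ V' ×ˢ (Finset.univ : Finset (Fin T)) := Finset.mem_coe.mp (hhW x)
      exact (Finset.mem_product.mp h2).1
    exact le_trans (Finset.card_le_card hSsub) hV'card
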